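/- The sunny-side-up at 0 is sofic on the long range graph: there exist a finite colour set B, a tileset Θ ⊆ B × {t,u} × B and a map π : B → {0,1} such that the set of valid Θ-tilings τ : ℤ → B of the long range graph is non-empty and every valid Θ-tiling τ satisfies π(τ(n)) = 1 if and only if n = 0; that is, {π ∘ τ : τ a valid Θ-tiling} consists exactly of the indicator function of {0}. -/
import Mathlib


/-!  Common definitions for the long range graph. -/

/-- The two edge labels of the long range graph. -/
inductive LRLab : Type
  | t : LRLab
  | u : LRLab
deriving DecidableEq

instance : Primcodable LRLab :=
  Primcodable.ofEquiv Bool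
    { toFun := fun l => match l with | .t => false | .u => true
      invFun := fun b => match b with | false => .t | true => .u
      left_inv := by intro l; cases l <;> rfl
      right_inv := by intro b; cases b <;> rfl }

/-- A map `τ : ℤ → B` is a valid `Θ`-tiling of the long range graph if the two endpoint
colours of every labelled edge form a triple in `Θ`: there is a `t`-edge from `n` to `n+1`
for every `n`, a `u`-loop at `0`, and a `u`-edge from `n` to `n + 2^(v₂(n)+1)` for `n ≠ 0`. -/
def LRValid {B : Type} (Θ : Set (B × LRLab × B)) (τ : ℤ → B) : Prop :=
  (∀ n : ℤ, (τ n, LRLab.t, τ (n + 1)) ∈ Θ) ∧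
  (τ 0, LRLab.u, τ 0) ∈ Θ ∧
  ∀ n : ℤ, n ≠ 0 → (τ n, LRLab.u, τ (n + 2 ^ (padicValInt 2 n + 1))) ∈ Θ

/-! Auxiliary material for the proof. -/

lemma val_two_pow_mul (s : ℕ) (o : ℤ) (ho : o % 2 = 1) :
    padicValInt 2 (2 ^ s * o) = s := by
  have ho0 : o ≠ 0 := by omega
  have hod : ¬ ((2:ℕ):ℤ) ∣ o := by push_cast; omega
  rw [padicValInt.mul (p := 2) (pow_ne_zero _ two_ne_zero) ho0,
    padicValInt.eq_zero_of_not_dvd hod]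
  have h : ((2:ℤ)) ^ s = ((2 ^ s : ℕ) : ℤ) := by push_cast; ring
  rw [h, padicValInt.of_nat, padicValNat.prime_pow, add_zero]

lemma rep_exists_aux : ∀ k : ℕ, ∀ n : ℤ, n.natAbs ≤ k → n ≠ 0 →
    ∃ s : ℕ, ∃ o : ℤ, o % 2 = 1 ∧ n = 2 ^ s * o := by
  intro k
  induction k with
  | zero => intro n h hn; omega
  | succ k ih =>
    intro n h hn
    rcases Int.even_or_odd n with ⟨m, hm⟩ | hodd
    · have hm0 : m ≠ 0 := by omega
      obtain ⟨s, o, ho, hrep⟩ := ih m (by omega) hm0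
      exact ⟨s + 1, o, ho, by rw [hm, hrep]; ring⟩
    · obtain ⟨m, hm⟩ := hodd
      exact ⟨0, n, by omega, by ring⟩

lemma rep_exists (n : ℤ) (hn : n ≠ 0) : ∃ s : ℕ, ∃ o : ℤ, o % 2 = 1 ∧ n = 2 ^ s * o :=
  rep_exists_aux n.natAbs n le_rfl hn

/-- The bit of the odd part of `n`: parity of `(o+1)/2` where `n = 2^s·o`, `o` odd. -/
def oddBit (n : ℤ) : Bool := decide ((n / 2 ^ padicValInt 2 n + 1) / 2 % 2 = 1)

lemma oddBit_rep (s : ℕ) (o : ℤ) (ho : o % 2 = 1) :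
    oddBit (2 ^ s * o) = decide ((o + 1) / 2 % 2 = 1) := by
  rw [oddBit, val_two_pow_mul s o ho,
    Int.mul_ediv_cancel_left _ (pow_ne_zero _ two_ne_zero)]

lemma succ_val_flip (n : ℤ) (hn : n ≠ 0) :
    n + 2 ^ (padicValInt 2 n + 1) ≠ 0 ∧
    oddBit (n + 2 ^ (padicValInt 2 n + 1)) ≠ oddBit n := by
  obtain ⟨s, o, ho, rfl⟩ := rep_exists n hn
  rw [val_two_pow_mul s o ho]
  have key : 2 ^ s * o + 2 ^ (s + 1) = 2 ^ s * (o + 2) := by ring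
  rw [key]
  have ho2 : (o + 2) % 2 = 1 := by omega
  constructor
  · have h0 : o + 2 ≠ 0 := by omega
    positivity
  · rw [oddBit_rep s o ho, oddBit_rep s (o + 2) ho2]
    obtain ⟨m, hm⟩ : ∃ m, o = 2 * m - 1 := ⟨(o + 1) / 2, by omega⟩
    subst hm
    have h1 : (2 * m - 1 + 1) / 2 = m := by omega
    have h2 : (2 * m - 1 + 2 + 1) / 2 = m + 1 := by omega
    rw [h1, h2]
    simp only [ne_eq, decide_eq_decide]
    omega

/-- Colours: `Z` (the origin), `P b` (positive with a bit), `N b` (negative with a bit). -/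
inductive LRC : Type
  | Z : LRC
  | P : Bool → LRC
  | N : Bool → LRC
deriving DecidableEq, Fintype

/-- The allowed tiles. -/
def LROk : LRC → LRLab → LRC → Prop
  | .N _, .t, .N _ => True
  | .N _, .t, .Z => True
  | .Z, .t, .P _ => True
  | .P _, .t, .P _ => True
  | .Z, .u, .Z => True
  | .P i, .u, .P j => i ≠ j
  | .P i, .u, .N j => i ≠ j
  | .N i, .u, .P j => i ≠ j
  | .N i, .u, .N j => i ≠ j
  | _, _, _ => False

/-- The model tiling. -/
def LRτ (n : ℤ) : LRC :=
  if n = 0 then .Z else if 0 < n then .P (oddBit n) else .N (oddBit n)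

/-- **The sunny-side-up at `0` is sofic on the long range graph**: there are a finite colour
set `B`, a tileset `Θ` and a projection `π : B → {0,1}` (here `{0,1}` is `Bool`) such that
valid `Θ`-tilings exist, and the projections `π ∘ τ` of valid `Θ`-tilings `τ` are exactly the
indicator function of `{0} ⊆ ℤ`. -/
theorem longrange_sunny_side_up_sofic :
    ∃ (B : Type) (_ : Fintype B) (Θ : Set (B × LRLab × B)) (π : B → Bool),
      (∃ τ : ℤ → B, LRValid Θ τ) ∧
      ∀ τ : ℤ → B, LRValid Θ τ → ∀ n : ℤ, (π (τ n) = true ↔ n = 0) := by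
  refine ⟨LRC, inferInstance, {x | LROk x.1 x.2.1 x.2.2},
    fun c => match c with | .Z => true | _ => false, ⟨LRτ, ?_, ?_, ?_⟩, ?_⟩
  · -- t-edges for the model tiling
    intro n
    show LROk (LRτ n) .t (LRτ (n + 1))
    rcases lt_trichotomy n 0 with h | h | h
    · rcases eq_or_lt_of_le (show n + 1 ≤ 0 by omega) with h1 | h1
      · simp only [LRτ, if_neg (show n ≠ 0 by omega), if_neg (not_lt.mpr h.le), h1,
          if_pos rfl]
        trivial
      · simp only [LRτ, if_neg (show n ≠ 0 by omega), if_neg (not_lt.mpr h.le),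
          if_neg (show ¬ n + 1 = 0 by omega), if_neg (not_lt.mpr (le_of_lt h1))]
        trivial
    · subst h
      simp only [LRτ, if_pos rfl, zero_add, if_neg one_ne_zero, if_pos one_pos]
      trivial
    · simp only [LRτ, if_neg (show n ≠ 0 by omega), if_pos h,
        if_neg (show ¬ n + 1 = 0 by omega), if_pos (show (0:ℤ) < n + 1 by omega)]
      trivial
  · -- the u-loop at 0
    show LROk (LRτ 0) .u (LRτ 0)
    simp only [LRτ, if_pos rfl]
    trivial
  · -- u-edges for the model tiling
    intro n hn
    show LROk (LRτ n) .u (LRτ (n + 2 ^ (padicValInt 2 n + 1)))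
    obtain ⟨hne, hflip⟩ := succ_val_flip n hn
    set m := n + 2 ^ (padicValInt 2 n + 1) with hm
    rcases lt_or_gt_of_ne hn with h | h <;>
      rcases lt_or_gt_of_ne hne with h' | h' <;>
      simp only [LRτ, if_neg hn, if_neg hne, if_pos, if_neg (not_lt.mpr h.le),
        if_neg (not_lt.mpr h'.le), if_pos h, if_pos h'] <;>
      exact fun e => hflip (by simpa using e.symm)
  · -- every valid tiling projects to the indicator of {0}
    rintro τ ⟨ht, hu0, hu⟩ n
    -- τ 0 = Z
    have h0 : τ 0 = .Z := by
      have h := hu0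
      rcases e : τ 0 with _ | i | i
      · rfl
      · rw [e] at h; exact absurd rfl h
      · rw [e] at h; exact absurd rfl h
    have hpos : ∀ k : ℕ, ∃ i, τ ((k : ℤ) + 1) = .P i := by
      intro k
      induction k with
      | zero =>
        have h := ht 0
        rw [h0] at h
        rcases e : τ (0 + 1) with _ | i | i <;> rw [e] at h
        · exact h.elim
        · exact ⟨i, rfl⟩
        · exact h.elim
      | succ k ih =>
        obtain ⟨i, hi⟩ := ih
        have h := ht ((k : ℤ) + 1)
        rw [hi] at h
        rcases e : τ ((k : ℤ) + 1 + 1) with _ | j | j <;> rw [e] at h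
        · exact h.elim
        · refine ⟨j, ?_⟩
          have hc : ((k + 1 : ℕ) : ℤ) + 1 = (k : ℤ) + 1 + 1 := by push_cast; ring
          rw [hc]; exact e
        · exact h.elim
    have hneg : ∀ k : ℕ, ∃ i, τ (-((k : ℤ) + 1)) = .N i := by
      intro k
      induction k with
      | zero =>
        have h := ht (-1)
        rw [show (-1 : ℤ) + 1 = 0 by ring, h0] at h
        rcases e : τ (-1) with _ | i | i <;> rw [e] at h
        · exact h.elim
        · exact h.elim
        · exact ⟨i, e⟩
      | succ k ih =>
        obtain ⟨i, hi⟩ := ih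
        have h := ht (-((k : ℤ) + 2))
        rw [show -((k : ℤ) + 2) + 1 = -((k : ℤ) + 1) by ring, hi] at h
        rcases e : τ (-((k : ℤ) + 2)) with _ | j | j <;> rw [e] at h
        · exact h.elim
        · exact h.elim
        · refine ⟨j, ?_⟩
          have hc : -(((k + 1 : ℕ) : ℤ) + 1) = -((k : ℤ) + 2) := by push_cast; ring
          rw [hc]; exact e
    constructor
    · intro hpi
      by_contra hn
      rcases lt_or_gt_of_ne hn with h | h
      · obtain ⟨k, hk⟩ : ∃ k : ℕ, n = -((k : ℤ) + 1) := ⟨(-n - 1).toNat, by omega⟩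
        obtain ⟨i, hi⟩ := hneg k
        rw [hk, hi] at hpi
        exact absurd hpi (by simp)
      · obtain ⟨k, hk⟩ : ∃ k : ℕ, n = (k : ℤ) + 1 := ⟨(n - 1).toNat, by omega⟩
        obtain ⟨i, hi⟩ := hpos k
        rw [hk, hi] at hpi
        exact absurd hpi (by simp)
    · rintro rfl
      rw [h0]
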